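/- Let R_j = I_j × I'_j ⊂ ℝ² be rectangles with sides parallel to the coordinate axes, for j = 1,2,3,4. Suppose each L_n : ℝ⁴ → ℝ² has the split form L_n(x₁,x₂,y₁,y₂) = (L_n¹(x₁,x₂), L_n²(y₁,y₂)) and the family is nondegenerate. Then for any permutation (i,j,k,l) of (1,2,3,4), Λ(1_{R₁},1_{R₂},1_{R₃},1_{R₄}) ≤ C · |I'_k| · |I'_l| · |I'_i|⁻¹ · |I'_j|⁻¹ · |R_i| · |R_j|, where C depends only on the maps L_n. -/

import Mathlib

open MeasureTheory Set

noncomputable section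

abbrev R2 := ℝ × ℝ

/-- Λ for maps satisfying the partial symmetry hypothesis
L_n(x, y) = (L¹_n x, L²_n y). -/
def LamPS (L1 L2 : Fin 4 → R2 →ₗ[ℝ] ℝ) (E : Fin 4 → Set R2) : ℝ :=
  ∫ z : R2 × R2, ∏ n, (E n).indicator (fun _ => (1 : ℝ)) (L1 n z.1, L2 n z.2)

lemma det_prod_ne_zero (f g : R2 →ₗ[ℝ] ℝ)
    (h : Function.Bijective (fun x : R2 => (f x, g x))) :
    LinearMap.det (f.prod g) ≠ 0 := by
  intro hdet
  have := LinearMap.bot_lt_ker_of_det_eq_zero hdet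
  rw [LinearMap.ker_eq_bot.mpr h.1] at this
  exact lt_irrefl _ this

lemma lam_key (L1 L2 : Fin 4 → R2 →ₗ[ℝ] ℝ)
    (a b a' b' : Fin 4 → ℝ) (hab : ∀ n, a n ≤ b n) (hab' : ∀ n, a' n ≤ b' n)
    (i j k l : Fin 4)
    (h1 : Function.Bijective (fun x : R2 => (L1 i x, L1 j x)))
    (h2 : Function.Bijective (fun y : R2 => (L2 k y, L2 l y))) :
    LamPS L1 L2 (fun n => Icc (a n) (b n) ×ˢ Icc (a' n) (b' n)) ≤
      |(LinearMap.det ((L1 i).prod (L1 j)))⁻¹| * |(LinearMap.det ((L2 k).prod (L2 l)))⁻¹| *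
        ((b i - a i) * (b j - a j) * ((b' k - a' k) * (b' l - a' l))) := by
  set T1 : R2 →ₗ[ℝ] R2 := (L1 i).prod (L1 j) with hT1
  set T2 : R2 →ₗ[ℝ] R2 := (L2 k).prod (L2 l) with hT2
  have hd1 : LinearMap.det T1 ≠ 0 := det_prod_ne_zero _ _ h1
  have hd2 : LinearMap.det T2 ≠ 0 := det_prod_ne_zero _ _ h2
  set A : Set R2 := T1 ⁻¹' (Icc (a i) (b i) ×ˢ Icc (a j) (b j)) with hA
  set B : Set R2 := T2 ⁻¹' (Icc (a' k) (b' k) ×ˢ Icc (a' l) (b' l)) with hB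
  have measA : MeasurableSet A :=
    (measurableSet_Icc.prod measurableSet_Icc).preimage
      (T1.continuous_of_finiteDimensional).measurable
  have measB : MeasurableSet B :=
    (measurableSet_Icc.prod measurableSet_Icc).preimage
      (T2.continuous_of_finiteDimensional).measurable
  have volA : volume A = ENNReal.ofReal |(LinearMap.det T1)⁻¹| *
      (ENNReal.ofReal (b i - a i) * ENNReal.ofReal (b j - a j)) := by
    rw [hA, Measure.addHaar_preimage_linearMap volume hd1,
      Measure.volume_eq_prod _ _, Measure.prod_prod, Real.volume_Icc, Real.volume_Icc]
  have volB : volume B = ENNReal.ofReal |(LinearMap.det T2)⁻¹| *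
      (ENNReal.ofReal (b' k - a' k) * ENNReal.ofReal (b' l - a' l)) := by
    rw [hB, Measure.addHaar_preimage_linearMap volume hd2,
      Measure.volume_eq_prod _ _, Measure.prod_prod, Real.volume_Icc, Real.volume_Icc]
  set S : Set (R2 × R2) := A ×ˢ B with hS
  have measS : MeasurableSet S := measA.prod measB
  have volS : volume S = volume A * volume B := by
    rw [hS, Measure.volume_eq_prod _ _, Measure.prod_prod]
  have hfin : volume S < ⊤ := by
    rw [volS, volA, volB]
    exact ENNReal.mul_lt_top
      (ENNReal.mul_lt_top ENNReal.ofReal_lt_top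
        (ENNReal.mul_lt_top ENNReal.ofReal_lt_top ENNReal.ofReal_lt_top))
      (ENNReal.mul_lt_top ENNReal.ofReal_lt_top
        (ENNReal.mul_lt_top ENNReal.ofReal_lt_top ENNReal.ofReal_lt_top))
  have step1 : LamPS L1 L2 (fun n => Icc (a n) (b n) ×ˢ Icc (a' n) (b' n)) ≤
      ∫ z : R2 × R2, S.indicator (fun _ => (1 : ℝ)) z := by
    apply integral_mono_of_nonneg
    · filter_upwards with z
      exact Finset.prod_nonneg fun n _ => Set.indicator_nonneg (fun _ _ => zero_le_one) _
    · rw [integrable_indicator_iff measS]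
      exact integrableOn_const hfin.ne
    · filter_upwards with z
      by_cases hz : z ∈ S
      · rw [Set.indicator_of_mem hz]
        refine Finset.prod_le_one
          (fun n _ => Set.indicator_nonneg (fun _ _ => zero_le_one) _) (fun n _ => ?_)
        by_cases hm : (L1 n z.1, L2 n z.2) ∈ Icc (a n) (b n) ×ˢ Icc (a' n) (b' n)
        · rw [Set.indicator_of_mem hm]
        · rw [Set.indicator_of_notMem hm]; exact zero_le_one
      · rw [Set.indicator_of_notMem hz]
        have : ∃ n, (L1 n z.1, L2 n z.2) ∉ Icc (a n) (b n) ×ˢ Icc (a' n) (b' n) := by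
          rw [hS, Set.mem_prod, not_and_or] at hz
          rcases hz with h | h
          · rw [hA, Set.mem_preimage, hT1] at h
            simp only [LinearMap.prod_apply, Pi.prod, Set.mem_prod, not_and_or] at h
            rcases h with h | h
            · exact ⟨i, fun hmem => h hmem.1⟩
            · exact ⟨j, fun hmem => h hmem.1⟩
          · rw [hB, Set.mem_preimage, hT2] at h
            simp only [LinearMap.prod_apply, Pi.prod, Set.mem_prod, not_and_or] at h
            rcases h with h | h
            · exact ⟨k, fun hmem => h hmem.2⟩
            · exact ⟨l, fun hmem => h hmem.2⟩
        obtain ⟨n, hn⟩ := this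
        rw [Finset.prod_eq_zero (Finset.mem_univ n)]
        exact Set.indicator_of_notMem hn _
  have step2 : (∫ z : R2 × R2, S.indicator (fun _ => (1 : ℝ)) z) = (volume S).toReal :=
    integral_indicator_one measS
  have step3 : (volume S).toReal =
      |(LinearMap.det T1)⁻¹| * |(LinearMap.det T2)⁻¹| *
        ((b i - a i) * (b j - a j) * ((b' k - a' k) * (b' l - a' l))) := by
    rw [volS, volA, volB]
    rw [ENNReal.toReal_mul, ENNReal.toReal_mul, ENNReal.toReal_mul, ENNReal.toReal_mul,
      ENNReal.toReal_mul, ENNReal.toReal_ofReal (abs_nonneg _),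
      ENNReal.toReal_ofReal (abs_nonneg _),
      ENNReal.toReal_ofReal (sub_nonneg.2 (hab i)),
      ENNReal.toReal_ofReal (sub_nonneg.2 (hab j)),
      ENNReal.toReal_ofReal (sub_nonneg.2 (hab' k)),
      ENNReal.toReal_ofReal (sub_nonneg.2 (hab' l))]
    ring
  calc LamPS L1 L2 (fun n => Icc (a n) (b n) ×ˢ Icc (a' n) (b' n)) ≤
      ∫ z : R2 × R2, S.indicator (fun _ => (1 : ℝ)) z := step1
    _ = _ := step2.trans step3

theorem lam_rectangle_bound (L1 L2 : Fin 4 → R2 →ₗ[ℝ] ℝ)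
    (hsurj : ∀ n, Function.Surjective (L1 n) ∧ Function.Surjective (L2 n))
    (hnd : ∀ i j, i ≠ j →
      Function.Bijective (fun x : R2 => (L1 i x, L1 j x)) ∧
      Function.Bijective (fun y : R2 => (L2 i y, L2 j y))) :
    ∃ C : ℝ, 0 ≤ C ∧ ∀ a b a' b' : Fin 4 → ℝ,
      (∀ n, a n ≤ b n) → (∀ n, a' n ≤ b' n) →
      ∀ σ : Equiv.Perm (Fin 4),
        LamPS L1 L2 (fun n => Icc (a n) (b n) ×ˢ Icc (a' n) (b' n)) ≤
          C * (b' (σ 2) - a' (σ 2)) * (b' (σ 3) - a' (σ 3)) *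
            (b' (σ 0) - a' (σ 0))⁻¹ * (b' (σ 1) - a' (σ 1))⁻¹ *
            ((b (σ 0) - a (σ 0)) * (b' (σ 0) - a' (σ 0))) *
            ((b (σ 1) - a (σ 1)) * (b' (σ 1) - a' (σ 1))) := by
  classical
  set c1 : Fin 4 → Fin 4 → ℝ := fun i j => |(LinearMap.det ((L1 i).prod (L1 j)))⁻¹| with hc1
  set c2 : Fin 4 → Fin 4 → ℝ := fun i j => |(LinearMap.det ((L2 i).prod (L2 j)))⁻¹| with hc2
  have hc1n : ∀ i j, 0 ≤ c1 i j := fun _ _ => abs_nonneg _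
  have hc2n : ∀ i j, 0 ≤ c2 i j := fun _ _ => abs_nonneg _
  set C : ℝ := (∑ i, ∑ j, c1 i j) * (∑ i, ∑ j, c2 i j) with hC
  have hs1 : 0 ≤ ∑ i, ∑ j, c1 i j :=
    Finset.sum_nonneg fun i _ => Finset.sum_nonneg fun j _ => hc1n i j
  have hs2 : 0 ≤ ∑ i, ∑ j, c2 i j :=
    Finset.sum_nonneg fun i _ => Finset.sum_nonneg fun j _ => hc2n i j
  have hle1 : ∀ i j, c1 i j ≤ ∑ i, ∑ j, c1 i j := fun i j =>
    le_trans (Finset.single_le_sum (fun m _ => hc1n i m) (Finset.mem_univ j))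
      (Finset.single_le_sum (fun m _ => Finset.sum_nonneg fun n _ => hc1n m n)
        (Finset.mem_univ i))
  have hle2 : ∀ i j, c2 i j ≤ ∑ i, ∑ j, c2 i j := fun i j =>
    le_trans (Finset.single_le_sum (fun m _ => hc2n i m) (Finset.mem_univ j))
      (Finset.single_le_sum (fun m _ => Finset.sum_nonneg fun n _ => hc2n m n)
        (Finset.mem_univ i))
  refine ⟨C, mul_nonneg hs1 hs2, ?_⟩
  intro a b a' b' hab hab' σ
  have hσ01 : σ 0 ≠ σ 1 := fun h => by have := σ.injective h; exact absurd this (by decide)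
  have hσ23 : σ 2 ≠ σ 3 := fun h => by have := σ.injective h; exact absurd this (by decide)
  by_cases h0 : b' (σ 0) = a' (σ 0)
  · have key := lam_key L1 L2 a b a' b' hab hab' (σ 0) (σ 1) (σ 0) (σ 1)
      (hnd _ _ hσ01).1 (hnd _ _ hσ01).2
    refine le_trans key (le_of_eq ?_)
    rw [h0]; ring
  by_cases h1 : b' (σ 1) = a' (σ 1)
  · have key := lam_key L1 L2 a b a' b' hab hab' (σ 0) (σ 1) (σ 0) (σ 1)
      (hnd _ _ hσ01).1 (hnd _ _ hσ01).2
    refine le_trans key (le_of_eq ?_)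
    rw [h1]; ring
  · have key := lam_key L1 L2 a b a' b' hab hab' (σ 0) (σ 1) (σ 2) (σ 3)
      (hnd _ _ hσ01).1 (hnd _ _ hσ23).2
    have h0' : b' (σ 0) - a' (σ 0) ≠ 0 := sub_ne_zero.2 h0
    have h1' : b' (σ 1) - a' (σ 1) ≠ 0 := sub_ne_zero.2 h1
    have hprod : 0 ≤ (b (σ 0) - a (σ 0)) * (b (σ 1) - a (σ 1)) *
        ((b' (σ 2) - a' (σ 2)) * (b' (σ 3) - a' (σ 3))) :=
      mul_nonneg (mul_nonneg (sub_nonneg.2 (hab _)) (sub_nonneg.2 (hab _)))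
        (mul_nonneg (sub_nonneg.2 (hab' _)) (sub_nonneg.2 (hab' _)))
    have hCle : c1 (σ 0) (σ 1) * c2 (σ 2) (σ 3) ≤ C :=
      mul_le_mul (hle1 _ _) (hle2 _ _) (hc2n _ _) hs1
    have heq : C * (b' (σ 2) - a' (σ 2)) * (b' (σ 3) - a' (σ 3)) *
            (b' (σ 0) - a' (σ 0))⁻¹ * (b' (σ 1) - a' (σ 1))⁻¹ *
            ((b (σ 0) - a (σ 0)) * (b' (σ 0) - a' (σ 0))) *
            ((b (σ 1) - a (σ 1)) * (b' (σ 1) - a' (σ 1))) =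
        C * ((b (σ 0) - a (σ 0)) * (b (σ 1) - a (σ 1)) *
          ((b' (σ 2) - a' (σ 2)) * (b' (σ 3) - a' (σ 3)))) := by
      field_simp
    rw [heq]
    refine le_trans key ?_
    have : c1 (σ 0) (σ 1) * c2 (σ 2) (σ 3) *
        ((b (σ 0) - a (σ 0)) * (b (σ 1) - a (σ 1)) *
          ((b' (σ 2) - a' (σ 2)) * (b' (σ 3) - a' (σ 3)))) ≤
        C * ((b (σ 0) - a (σ 0)) * (b (σ 1) - a (σ 1)) *
          ((b' (σ 2) - a' (σ 2)) * (b' (σ 3) - a' (σ 3)))) :=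
      mul_le_mul_of_nonneg_right hCle hprod
    exact this

end
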